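/- Define U₄=(ℕ², F₄) with F₄={fᵢ : i∈ℕ} ∪ {f_{i,j} : i,j∈ℕ}, where fᵢ(p,q)=1 iff p>i and f_{i,j}(a)=1 iff a=(i,j). Then a system of equations over U₄ is inconsistent if and only if it contains one of the following pairs: {f_{i,j}(x)=0, f_{i,j}(x)=1}; {f_{i,j}(x)=1, f_{k,l}(x)=1} with (i,j)≠(k,l); {f_{i,j}(x)=1, f_k(x)=0} with i>k; {f_{i,j}(x)=1, f_k(x)=1} with i≤k; {f_i(x)=0, f_j(x)=1} with i≤j. Consequently, U₄ is 2-i-reduced. -/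
import Mathlib


/-- An equation system over a binary information system with element set `A`
is a set of pairs `(g, δ)` encoding equations `g(x) = δ`. It is consistent
if it has a solution in `A`. -/
def Consistent {A : Type} (S : Set ((A → Bool) × Bool)) : Prop :=
  ∃ a : A, ∀ e ∈ S, e.1 a = e.2

/-- The system `S` uses only attributes from `F`. -/
def OverF {A : Type} (F : Set (A → Bool)) (S : Set ((A → Bool) × Bool)) : Prop :=
  ∀ e ∈ S, e.1 ∈ F

/-- Solution set of an equation system. -/
def Sol {A : Type} (S : Set ((A → Bool) × Bool)) : Set A :=
  {a | ∀ e ∈ S, e.1 a = e.2}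

/-- `U = (A, F)` is `r`-i-reduced: every inconsistent (finite) equation system over `U`
has an inconsistent subsystem with at most `r` equations. -/
def IReduced {A : Type} (F : Set (A → Bool)) (r : ℕ) : Prop :=
  ∀ S : Set ((A → Bool) × Bool), OverF F S → S.Finite → ¬ Consistent S →
    ∃ T ⊆ S, ¬ Consistent T ∧ T.ncard ≤ r

/-- `U = (A, F)` is `r`-reduced: every consistent (finite) equation system over `U`
has a subsystem with the same solution set and at most `r` equations. -/
def RReduced {A : Type} (F : Set (A → Bool)) (r : ℕ) : Prop :=
  ∀ S : Set ((A → Bool) × Bool), OverF F S → S.Finite → Consistent S →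
    ∃ T ⊆ S, Sol T = Sol S ∧ T.ncard ≤ r

/-- `fᵢ(p,q) = 1` iff `p > i`. -/
def f4 (i : ℕ+) : ℕ+ × ℕ+ → Bool := fun a => decide (i < a.1)

/-- `f_{i,j}(a) = 1` iff `a = (i,j)`. -/
def g4 (i j : ℕ+) : ℕ+ × ℕ+ → Bool := fun a => decide (a = (i, j))

/-- The attribute set of `U₄`. -/
def F4 : Set (ℕ+ × ℕ+ → Bool) := Set.range f4 ∪ {g | ∃ i j : ℕ+, g = g4 i j}

lemma f4_inj : Function.Injective f4 := by
  intro i j h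
  have h1 := congrFun h (i + 1, 1)
  have h2 := congrFun h (j + 1, 1)
  simp [f4, PNat.lt_add_one_iff] at h1 h2
  exact le_antisymm h2 h1

lemma g4_inj {i j k l : ℕ+} (h : g4 i j = g4 k l) : i = k ∧ j = l := by
  have h1 := congrFun h (i, j)
  simp [g4, Prod.ext_iff] at h1
  exact h1

lemma f4_mem : ∀ k : ℕ+, f4 k ∈ F4 := fun k => Or.inl ⟨k, rfl⟩
lemma g4_mem : ∀ i j : ℕ+, g4 i j ∈ F4 := fun i j => Or.inr ⟨i, j, rfl⟩


/-- an equation system over `U₄` is inconsistent iff it contains one of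
the five listed pairs of equations; consequently `U₄` is 2-i-reduced. -/
theorem stmt19 :
    (∀ S : Set ((ℕ+ × ℕ+ → Bool) × Bool), OverF F4 S → S.Finite →
      (¬ Consistent S ↔
        (∃ i j : ℕ+, (g4 i j, false) ∈ S ∧ (g4 i j, true) ∈ S) ∨
        (∃ i j k l : ℕ+, (i, j) ≠ (k, l) ∧ (g4 i j, true) ∈ S ∧ (g4 k l, true) ∈ S) ∨
        (∃ i j k : ℕ+, k < i ∧ (g4 i j, true) ∈ S ∧ (f4 k, false) ∈ S) ∨
        (∃ i j k : ℕ+, i ≤ k ∧ (g4 i j, true) ∈ S ∧ (f4 k, true) ∈ S) ∨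
        (∃ i j : ℕ+, i ≤ j ∧ (f4 i, false) ∈ S ∧ (f4 j, true) ∈ S))) ∧
    IReduced F4 2 := by
  have main : ∀ S : Set ((ℕ+ × ℕ+ → Bool) × Bool), OverF F4 S → S.Finite →
      (¬ Consistent S ↔
        (∃ i j : ℕ+, (g4 i j, false) ∈ S ∧ (g4 i j, true) ∈ S) ∨
        (∃ i j k l : ℕ+, (i, j) ≠ (k, l) ∧ (g4 i j, true) ∈ S ∧ (g4 k l, true) ∈ S) ∨
        (∃ i j k : ℕ+, k < i ∧ (g4 i j, true) ∈ S ∧ (f4 k, false) ∈ S) ∨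
        (∃ i j k : ℕ+, i ≤ k ∧ (g4 i j, true) ∈ S ∧ (f4 k, true) ∈ S) ∨
        (∃ i j : ℕ+, i ≤ j ∧ (f4 i, false) ∈ S ∧ (f4 j, true) ∈ S)) := by
    intro S hF hfin
    constructor
    · -- forward: contrapositive
      intro hinc
      by_contra hno
      push_neg at hno
      obtain ⟨h1, h2, h3, h4, h5⟩ := hno
      apply hinc
      by_cases hg : ∃ i j : ℕ+, (g4 i j, true) ∈ S
      · obtain ⟨i, j, hij⟩ := hg
        refine ⟨(i, j), ?_⟩
        rintro ⟨g, δ⟩ he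
        rcases hF _ he with ⟨k, rfl⟩ | ⟨k, l, rfl⟩
        · cases δ with
          | false =>
            simp only [f4, decide_eq_false_iff_not]
            intro hk
            exact h3 i j k hk hij he
          | true =>
            simp only [f4, decide_eq_true_eq]
            by_contra hk
            exact h4 i j k (not_lt.mp hk) hij he
        · cases δ with
          | false =>
            simp only [g4, decide_eq_false_iff_not]
            intro heq
            rw [Prod.ext_iff] at heq
            obtain ⟨rfl, rfl⟩ := heq
            exact h1 i j he hij
          | true =>
            by_cases heq : (i, j) = (k, l)
            · obtain ⟨rfl, rfl⟩ := Prod.ext_iff.mp heq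
              simp [g4]
            · exact absurd he (h2 i j k l heq hij)
      · push_neg at hg
        -- no g-equation with value true; build (p, q)
        have hTfin : {k : ℕ+ | (f4 k, true) ∈ S}.Finite := by
          have : {k : ℕ+ | (f4 k, true) ∈ S} ⊆ (fun k => (f4 k, true)) ⁻¹' S := fun k hk => hk
          refine Set.Finite.subset (Set.Finite.preimage ?_ hfin) this
          intro a _ b _ h
          exact f4_inj (congrArg Prod.fst h)
        have hp : ∃ p : ℕ+, (∀ k, (f4 k, true) ∈ S → k < p) ∧
            (∀ k, (f4 k, false) ∈ S → p ≤ k) := by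
          rcases Set.eq_empty_or_nonempty {k : ℕ+ | (f4 k, true) ∈ S} with hT | hT
          · refine ⟨1, fun k hk => ?_, fun k _ => k.one_le⟩
            exact absurd (hT ▸ hk : k ∈ (∅ : Set ℕ+)) (Set.notMem_empty k)
          · set m := hTfin.toFinset.max' (by simpa using hT) with hm
            have hmT : (f4 m, true) ∈ S := by
              have := hTfin.toFinset.max'_mem (by simpa using hT)
              simpa using this
            refine ⟨m + 1, fun k hk => ?_, fun k hk => ?_⟩
            · have : k ≤ m := hTfin.toFinset.le_max' k (by simpa using hk)
              exact lt_of_le_of_lt this (PNat.lt_add_one_iff.mpr le_rfl)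
            · by_contra hle
              have hkm : k ≤ m := by
                have := PNat.lt_add_one_iff.mp (not_le.mp hle)
                exact this
              exact h5 k m hkm hk hmT
        obtain ⟨p, hp1, hp2⟩ := hp
        have hBfin : {l : ℕ+ | (g4 p l, false) ∈ S}.Finite := by
          have : {l : ℕ+ | (g4 p l, false) ∈ S} ⊆ (fun l => (g4 p l, false)) ⁻¹' S :=
            fun l hl => hl
          refine Set.Finite.subset (Set.Finite.preimage ?_ hfin) this
          intro a _ b _ h
          exact (g4_inj (congrArg Prod.fst h)).2
        obtain ⟨q, hq⟩ := hBfin.infinite_compl.nonempty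
        refine ⟨(p, q), ?_⟩
        rintro ⟨g, δ⟩ he
        rcases hF _ he with ⟨k, rfl⟩ | ⟨k, l, rfl⟩
        · cases δ with
          | false =>
            simp only [f4, decide_eq_false_iff_not]
            exact not_lt.mpr (hp2 k he)
          | true =>
            simp only [f4, decide_eq_true_eq]
            exact hp1 k he
        · cases δ with
          | false =>
            simp only [g4, decide_eq_false_iff_not, Prod.mk.injEq]
            rintro ⟨rfl, rfl⟩
            exact hq he
          | true => exact absurd he (hg k l)
    · -- backward
      rintro (⟨i, j, h1, h2⟩ | ⟨i, j, k, l, hne, h1, h2⟩ | ⟨i, j, k, hki, h1, h2⟩ |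
          ⟨i, j, k, hik, h1, h2⟩ | ⟨i, j, hij, h1, h2⟩) ⟨a, ha⟩
      · have e1 := ha _ h1; have e2 := ha _ h2
        simp only at e1 e2; rw [e1] at e2; exact Bool.false_ne_true e2
      · have e1 := ha _ h1; have e2 := ha _ h2
        simp only [g4, decide_eq_true_eq] at e1 e2
        exact hne (e1 ▸ e2 ▸ rfl)
      · have e1 := ha _ h1; have e2 := ha _ h2
        simp only [g4, f4, decide_eq_true_eq, decide_eq_false_iff_not] at e1 e2
        exact e2 (e1 ▸ hki)
      · have e1 := ha _ h1; have e2 := ha _ h2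
        simp only [g4, f4, decide_eq_true_eq] at e1 e2
        rw [e1] at e2; simp at e2; exact absurd hik (not_le.mpr e2)
      · have e1 := ha _ h1; have e2 := ha _ h2
        simp only [f4, decide_eq_true_eq, decide_eq_false_iff_not] at e1 e2
        exact e1 (lt_of_le_of_lt hij e2)
  refine ⟨main, ?_⟩
  intro S hF hfin hinc
  have key := (main S hF hfin).mp hinc
  have pair_card : ∀ e1 e2 : (ℕ+ × ℕ+ → Bool) × Bool, ({e1, e2} : Set _).ncard ≤ 2 := by
    intro e1 e2
    calc ({e1, e2} : Set _).ncard ≤ ({e2} : Set _).ncard + 1 :=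
          Set.ncard_insert_le _ _
      _ ≤ 2 := by simp
  have pair_fin : ∀ e1 e2 : (ℕ+ × ℕ+ → Bool) × Bool, ({e1, e2} : Set _).Finite := by
    intro e1 e2; exact (Set.finite_singleton _).insert _
  rcases key with ⟨i, j, h1, h2⟩ | ⟨i, j, k, l, hne, h1, h2⟩ | ⟨i, j, k, hki, h1, h2⟩ |
      ⟨i, j, k, hik, h1, h2⟩ | ⟨i, j, hij, h1, h2⟩
  · refine ⟨{(g4 i j, false), (g4 i j, true)}, ?_, ?_, pair_card _ _⟩
    · rintro e (rfl | rfl) <;> assumption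
    · refine (main _ ?_ (pair_fin _ _)).mpr (Or.inl ⟨i, j, by simp, by simp⟩)
      rintro e (rfl | rfl) <;> exact g4_mem i j
  · refine ⟨{(g4 i j, true), (g4 k l, true)}, ?_, ?_, pair_card _ _⟩
    · rintro e (rfl | rfl) <;> assumption
    · refine (main _ ?_ (pair_fin _ _)).mpr
        (Or.inr (Or.inl ⟨i, j, k, l, hne, by simp, by simp⟩))
      rintro e (rfl | rfl) <;> first | exact g4_mem i j | exact g4_mem k l
  · refine ⟨{(g4 i j, true), (f4 k, false)}, ?_, ?_, pair_card _ _⟩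
    · rintro e (rfl | rfl) <;> assumption
    · refine (main _ ?_ (pair_fin _ _)).mpr
        (Or.inr (Or.inr (Or.inl ⟨i, j, k, hki, by simp, by simp⟩)))
      rintro e (rfl | rfl) <;> first | exact g4_mem i j | exact f4_mem k
  · refine ⟨{(g4 i j, true), (f4 k, true)}, ?_, ?_, pair_card _ _⟩
    · rintro e (rfl | rfl) <;> assumption
    · refine (main _ ?_ (pair_fin _ _)).mpr
        (Or.inr (Or.inr (Or.inr (Or.inl ⟨i, j, k, hik, by simp, by simp⟩))))
      rintro e (rfl | rfl) <;> first | exact g4_mem i j | exact f4_mem k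
  · refine ⟨{(f4 i, false), (f4 j, true)}, ?_, ?_, pair_card _ _⟩
    · rintro e (rfl | rfl) <;> assumption
    · refine (main _ ?_ (pair_fin _ _)).mpr
        (Or.inr (Or.inr (Or.inr (Or.inr ⟨i, j, hij, by simp, by simp⟩))))
      rintro e (rfl | rfl) <;> first | exact f4_mem i | exact f4_mem j
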